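/- Let V be a finite set, J and H multigraphs on V, k an integer, R ⊆ V, and T a nonempty proper subset of V\R (so (V\R)\T ≠ ∅). Assume: (a) if d_H(T, (V\R)\T) ≥ 1 then d_J(T, (V\R)\T) ≥ ⌈(k−1)/2⌉; (b) d_J(T) ≥ k − d_H(T) − 1 and d_J((V\R)\T) ≥ k − d_H((V\R)\T) − 1; (c) d_J(R) ≤ k − d_H(R) + 2. Then 2·d_J(T, (V\R)\T) ≥ k − 4, i.e., d_J(T, (V\R)\T) ≥ ⌈(k−4)/2⌉. -/
import Mathlib


open Finset

variable {V : Type*} [Fintype V] [DecidableEq V]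

/-- `d_m(S,T)`: total multiplicity of edges of the multigraph `m` with one end in `S` and
the other in `T` (for disjoint `S`, `T`). -/
def dBetween (m : V → V → ℕ) (S T : Finset V) : ℕ := ∑ u ∈ S, ∑ v ∈ T, m u v

/-- `d_m(S) = d_m(S, V \ S)`. -/
def degS (m : V → V → ℕ) (S : Finset V) : ℕ := dBetween m S Sᶜ

lemma dBetween_comm' (m : V → V → ℕ) (hm : ∀ a b, m a b = m b a) (S T : Finset V) :
    dBetween m S T = dBetween m T S := by
  unfold dBetween
  rw [Finset.sum_comm]
  exact Finset.sum_congr rfl fun u _ => Finset.sum_congr rfl fun v _ => hm v u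

lemma dBetween_union (m : V → V → ℕ) (S A B : Finset V) (hd : Disjoint A B) :
    dBetween m S (A ∪ B) = dBetween m S A + dBetween m S B := by
  unfold dBetween
  simp [Finset.sum_union hd, Finset.sum_add_distrib]

/-- Lemma 5.5: for a contracted set `R` and a nonempty proper subset `T` of `V \ R`,
`d_J(T, (V \ R) \ T) ≥ ⌈(k-4)/2⌉`. -/
theorem edges_outside_contracted_set'
    (J H : V → V → ℕ)
    (hJsymm : ∀ a b, J a b = J b a) (hHsymm : ∀ a b, H a b = H b a)
    (k : ℤ) (R T : Finset V)
    (hTR : T ⊆ Rᶜ) (hTne : T.Nonempty) (hTprop : T ≠ Rᶜ)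
    (ha : 1 ≤ dBetween H T (Rᶜ \ T) →
      ⌈((k : ℚ) - 1) / 2⌉ ≤ (dBetween J T (Rᶜ \ T) : ℤ))
    (hb1 : k - (degS H T : ℤ) - 1 ≤ (degS J T : ℤ))
    (hb2 : k - (degS H (Rᶜ \ T) : ℤ) - 1 ≤ (degS J (Rᶜ \ T) : ℤ))
    (hc : (degS J R : ℤ) ≤ k - (degS H R : ℤ) + 2) :
    k - 4 ≤ 2 * (dBetween J T (Rᶜ \ T) : ℤ) ∧
      ⌈((k : ℚ) - 4) / 2⌉ ≤ (dBetween J T (Rᶜ \ T) : ℤ) := by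
  set B := Rᶜ \ T with hB
  have key : k - 4 ≤ 2 * (dBetween J T B : ℤ) := by
    by_cases h1 : 1 ≤ dBetween H T B
    · have hc1 := ha h1
      have hle : ((k : ℚ) - 1) / 2 ≤ ((dBetween J T B : ℤ) : ℚ) := by
        calc ((k : ℚ) - 1) / 2 ≤ (⌈((k : ℚ) - 1) / 2⌉ : ℚ) := Int.le_ceil _
          _ ≤ ((dBetween J T B : ℤ) : ℚ) := by exact_mod_cast hc1
      have : (k : ℚ) - 1 ≤ 2 * ((dBetween J T B : ℤ) : ℚ) := by linarith
      have : (k : ℤ) - 1 ≤ 2 * (dBetween J T B : ℤ) := by exact_mod_cast this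
      linarith
    · have h0 : dBetween H T B = 0 := by omega
      have hdTR : Disjoint T R := Disjoint.mono_left hTR disjoint_compl_left
      have hdBR : Disjoint B R :=
        Disjoint.mono_left Finset.sdiff_subset disjoint_compl_left
      have hdTB : Disjoint T B := Finset.disjoint_sdiff
      have hTc : Tᶜ = B ∪ R := by
        ext x
        simp only [Finset.mem_compl, Finset.mem_union, hB, Finset.mem_sdiff]
        constructor
        · intro hx
          by_cases hR : x ∈ R
          · exact Or.inr hR
          · exact Or.inl ⟨hR, hx⟩
        · rintro (⟨_, h⟩ | h)
          · exact h
          · intro hT; exact Finset.mem_compl.mp (hTR hT) h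
      have hBc : Bᶜ = T ∪ R := by
        ext x
        simp only [Finset.mem_compl, Finset.mem_union, hB, Finset.mem_sdiff,
          Finset.mem_compl]
        tauto
      have hRc : Rᶜ = T ∪ B := by
        ext x
        simp only [Finset.mem_union, hB, Finset.mem_sdiff]
        constructor
        · intro hx
          by_cases hT : x ∈ T
          · exact Or.inl hT
          · exact Or.inr ⟨hx, hT⟩
        · rintro (h | ⟨h, _⟩)
          · exact hTR h
          · exact h
      have eT : degS J T = dBetween J T B + dBetween J T R := by
        rw [degS, hTc, dBetween_union _ _ _ _ hdBR]
      have eB : degS J B = dBetween J T B + dBetween J B R := by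
        rw [degS, hBc, dBetween_union _ _ _ _ hdTR,
          dBetween_comm' J hJsymm B T]
      have eR : degS J R = dBetween J T R + dBetween J B R := by
        rw [degS, hRc, dBetween_union _ _ _ _ hdTB,
          dBetween_comm' J hJsymm R T, dBetween_comm' J hJsymm R B]
      have eHT : degS H T = dBetween H T B + dBetween H T R := by
        rw [degS, hTc, dBetween_union _ _ _ _ hdBR]
      have eHB : degS H B = dBetween H T B + dBetween H B R := by
        rw [degS, hBc, dBetween_union _ _ _ _ hdTR,
          dBetween_comm' H hHsymm B T]
      have eHR : degS H R = dBetween H T R + dBetween H B R := by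
        rw [degS, hRc, dBetween_union _ _ _ _ hdTB,
          dBetween_comm' H hHsymm R T, dBetween_comm' H hHsymm R B]
      rw [eT] at hb1
      rw [eB] at hb2
      rw [eR, eHR] at hc
      rw [eHT, h0] at hb1
      rw [eHB, h0] at hb2
      push_cast at hb1 hb2 hc ⊢
      linarith
  refine ⟨key, Int.ceil_le.mpr ?_⟩
  rw [div_le_iff₀ (by norm_num : (0:ℚ) < 2)]
  have key' : (k : ℚ) - 4 ≤ 2 * ((dBetween J T B : ℤ) : ℚ) := by exact_mod_cast key
  push_cast at key' ⊢
  linarith
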